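/- Consider the Sturm–Liouville-type operator L u = (f u')' on the interval [X₋, X₊] with interior point X₀ ∈ (X₋, X₊), where f is C¹ and the functions u satisfy: continuity u(X₀⁻)=u(X₀⁺), the value conditions u(X₋)=u(X₀) and u(X₊)=u(X₀), and the flux condition f(X₊)u'(X₊) − f(X₀⁺)u'(X₀⁺) + f(X₀⁻)u'(X₀⁻) − f(X₋)u'(X₋) = 0. If u and v satisfy these boundary conditions and Lu = λu, Lv = μv with λ ≠ μ, then ∫_{X₋}^{X₊} u v dx = 0. -/

import Mathlib

lemma key_green (a b : ℝ) (hab : a ≤ b) (f u v : ℝ → ℝ)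
    (hf : ContDiff ℝ 1 f) (hu : ContDiff ℝ 2 u) (hv : ContDiff ℝ 2 v) (lam mu : ℝ)
    (heu : ∀ x ∈ Set.Icc a b, deriv (fun y => f y * deriv u y) x = lam * u x)
    (hev : ∀ x ∈ Set.Icc a b, deriv (fun y => f y * deriv v y) x = mu * v x) :
    (lam - mu) * ∫ x in a..b, u x * v x =
      (f b * deriv u b * v b - f b * deriv v b * u b)
        - (f a * deriv u a * v a - f a * deriv v a * u a) := by
  have hu' : ContDiff ℝ 1 (deriv u) := (contDiff_succ_iff_deriv.mp (show ContDiff ℝ (1+1) u by norm_num; exact hu)).2.2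
  have hv' : ContDiff ℝ 1 (deriv v) := (contDiff_succ_iff_deriv.mp (show ContDiff ℝ (1+1) v by norm_num; exact hv)).2.2
  have hfu : ContDiff ℝ 1 (fun y => f y * deriv u y) := hf.mul hu'
  have hfv : ContDiff ℝ 1 (fun y => f y * deriv v y) := hf.mul hv'
  set g : ℝ → ℝ := fun x => f x * deriv u x * v x - f x * deriv v x * u x with hg
  have hder : ∀ x ∈ Set.uIcc a b, HasDerivAt g ((lam - mu) * (u x * v x)) x := by
    intro x hx
    rw [Set.uIcc_of_le hab] at hx
    have h1 : HasDerivAt (fun y => f y * deriv u y) (lam * u x) x := by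
      have := ((hfu.differentiable one_ne_zero) x).hasDerivAt
      rwa [heu x hx] at this
    have h2 : HasDerivAt (fun y => f y * deriv v y) (mu * v x) x := by
      have := ((hfv.differentiable one_ne_zero) x).hasDerivAt
      rwa [hev x hx] at this
    have hvx : HasDerivAt v (deriv v x) x := ((hv.differentiable (by norm_num)) x).hasDerivAt
    have hux : HasDerivAt u (deriv u x) x := ((hu.differentiable (by norm_num)) x).hasDerivAt
    have := (h1.mul hvx).sub (h2.mul hux)
    convert this using 1
    any_goals rfl
    ring
  have hint : IntervalIntegrable (fun x => (lam - mu) * (u x * v x)) MeasureTheory.volume a b :=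
    ((continuous_const.mul (hu.continuous.mul hv.continuous))).intervalIntegrable a b
  have := intervalIntegral.integral_eq_sub_of_hasDerivAt hder hint
  rw [intervalIntegral.integral_const_mul] at this
  exact this

/-- Orthogonality of eigenmodes of the operator `L u = (f u')'` on `[X₋,X₊]`
with the insulating coupling conditions at the interior grid point `X₀`.
Eigenmodes are represented by their left and right pieces. -/
theorem stmt1 (Xm X0 Xp : ℝ) (h1 : Xm < X0) (h2 : X0 < Xp)
    (f : ℝ → ℝ) (hf : ContDiff ℝ 1 f)
    (u₁ u₂ v₁ v₂ : ℝ → ℝ) (lam mu : ℝ) (hlm : lam ≠ mu)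
    (hu₁ : ContDiff ℝ 2 u₁) (hu₂ : ContDiff ℝ 2 u₂)
    (hv₁ : ContDiff ℝ 2 v₁) (hv₂ : ContDiff ℝ 2 v₂)
    -- eigen-equations `L u = λ u`, `L v = μ v` on the two halves
    (heu₁ : ∀ x ∈ Set.Icc Xm X0, deriv (fun y => f y * deriv u₁ y) x = lam * u₁ x)
    (heu₂ : ∀ x ∈ Set.Icc X0 Xp, deriv (fun y => f y * deriv u₂ y) x = lam * u₂ x)
    (hev₁ : ∀ x ∈ Set.Icc Xm X0, deriv (fun y => f y * deriv v₁ y) x = mu * v₁ x)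
    (hev₂ : ∀ x ∈ Set.Icc X0 Xp, deriv (fun y => f y * deriv v₂ y) x = mu * v₂ x)
    -- continuity and value conditions for u
    (hcu : u₁ X0 = u₂ X0) (hu_m : u₁ Xm = u₁ X0) (hu_p : u₂ Xp = u₁ X0)
    -- continuity and value conditions for v
    (hcv : v₁ X0 = v₂ X0) (hv_m : v₁ Xm = v₁ X0) (hv_p : v₂ Xp = v₁ X0)
    -- flux conditions
    (hfu : f Xp * deriv u₂ Xp - f X0 * deriv u₂ X0
            + f X0 * deriv u₁ X0 - f Xm * deriv u₁ Xm = 0)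
    (hfv : f Xp * deriv v₂ Xp - f X0 * deriv v₂ X0
            + f X0 * deriv v₁ X0 - f Xm * deriv v₁ Xm = 0) :
    (∫ x in Xm..X0, u₁ x * v₁ x) + (∫ x in X0..Xp, u₂ x * v₂ x) = 0 := by
  have k1 := key_green Xm X0 h1.le f u₁ v₁ hf hu₁ hv₁ lam mu heu₁ hev₁
  have k2 := key_green X0 Xp h2.le f u₂ v₂ hf hu₂ hv₂ lam mu heu₂ hev₂
  have hsum : (lam - mu) *
      ((∫ x in Xm..X0, u₁ x * v₁ x) + (∫ x in X0..Xp, u₂ x * v₂ x)) = 0 := by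
    rw [mul_add, k1, k2, ← hcu, ← hcv, hu_m, hu_p, hv_m, hv_p]
    linear_combination (v₁ X0) * hfu - (u₁ X0) * hfv
  rcases mul_eq_zero.mp hsum with h | h
  · exact absurd (sub_eq_zero.mp h) hlm
  · exact h
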